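/- Let z > 0 and q > 0 be real, let N be a natural number, and let a ∈ ℂ satisfy Re a > N + 1. Then | ∫₀^∞ exp(−(x + q/x)/z) · x^{a−1} dx − Σ_{m=0}^{N} (−1)^m q^m z^{a−2m} Γ(a−m)/m! | ≤ q^{N+1} · z^{Re a − 2(N+1)} · Γ(Re a − N − 1) / (N+1)!. -/

import Mathlib

open MeasureTheory Set


lemma exp_neg_taylor_bound : ∀ (n : ℕ) (t : ℝ), 0 ≤ t →
    |Real.exp (-t) - ∑ m ∈ Finset.range n, (-t) ^ m / m.factorial| ≤ t ^ n / n.factorial := by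
  intro n
  induction n with
  | zero =>
    intro t ht
    simp only [Finset.range_zero, Finset.sum_empty, sub_zero, pow_zero, Nat.factorial_zero,
      Nat.cast_one, div_one]
    rw [abs_of_pos (Real.exp_pos _)]
    exact Real.exp_le_one_iff.mpr (by linarith)
  | succ n ih =>
    intro t ht
    set F : ℝ → ℝ := fun u => Real.exp (-u) - ∑ m ∈ Finset.range (n+1), (-u) ^ m / m.factorial
      with hF
    have hF0 : F 0 = 0 := by
      simp [hF, Finset.sum_range_succ']
    have hderiv : ∀ s : ℝ,
        HasDerivAt F (-(Real.exp (-s) - ∑ m ∈ Finset.range n, (-s) ^ m / m.factorial)) s := by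
      intro s
      have h1 : HasDerivAt (fun u : ℝ => Real.exp (-u)) (-Real.exp (-s)) s := by
        simpa using (hasDerivAt_neg s).exp
      have h2 : HasDerivAt (fun u : ℝ => ∑ m ∈ Finset.range (n+1), (-u) ^ m / m.factorial)
          (∑ m ∈ Finset.range (n+1), ((m : ℝ) * (-s) ^ (m-1) * (-1)) / m.factorial) s := by
        apply HasDerivAt.fun_sum
        intro m _
        exact ((hasDerivAt_pow m (-s)).comp s (hasDerivAt_neg s)).div_const _
      have hsum : (∑ m ∈ Finset.range (n+1), ((m : ℝ) * (-s) ^ (m-1) * (-1)) / m.factorial)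
          = -(∑ m ∈ Finset.range n, (-s) ^ m / m.factorial) := by
        rw [Finset.sum_range_succ', ← Finset.sum_neg_distrib]
        simp only [Nat.cast_zero, zero_mul, zero_div, add_zero, Nat.add_sub_cancel]
        refine Finset.sum_congr rfl fun i _ => ?_
        rw [Nat.factorial_succ]
        have h : (i.factorial : ℝ) ≠ 0 := by positivity
        push_cast
        field_simp
      rw [hsum] at h2
      have h3 := h1.sub h2
      exact h3.congr_deriv (by ring)
    have hcont : Continuous fun s : ℝ =>
        -(Real.exp (-s) - ∑ m ∈ Finset.range n, (-s) ^ m / m.factorial) := by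
      fun_prop
    have hFTC : ∫ s in (0:ℝ)..t,
        -(Real.exp (-s) - ∑ m ∈ Finset.range n, (-s) ^ m / m.factorial) = F t - F 0 :=
      intervalIntegral.integral_eq_sub_of_hasDerivAt (fun s _ => hderiv s)
        (hcont.intervalIntegrable 0 t)
    rw [hF0, sub_zero] at hFTC
    have hb : |F t| ≤ ∫ s in (0:ℝ)..t, s ^ n / n.factorial := by
      rw [← hFTC, ← Real.norm_eq_abs]
      refine le_trans (intervalIntegral.norm_integral_le_integral_norm ht) ?_
      refine intervalIntegral.integral_mono_on ht ?_ ?_ ?_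
      · exact (hcont.norm).intervalIntegrable 0 t
      · exact (Continuous.intervalIntegrable (by fun_prop) 0 t)
      · intro s hs
        rw [norm_neg, Real.norm_eq_abs]
        exact ih s hs.1
    calc |F t| ≤ ∫ s in (0:ℝ)..t, s ^ n / n.factorial := hb
      _ = t ^ (n+1) / (n+1).factorial := by
          rw [intervalIntegral.integral_div, integral_pow, Nat.factorial_succ]
          push_cast
          field_simp
          simp


lemma integrableOn_exp_inv_mul_cpow (s : ℂ) (hs : 0 < s.re) {z : ℝ} (hz : 0 < z) :
    IntegrableOn (fun x : ℝ => (Real.exp (-(z⁻¹ * x)) : ℂ) * (x : ℂ) ^ (s - 1)) (Ioi 0) := by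
  have h := Complex.GammaIntegral_convergent hs
  have h2 : IntegrableOn (fun x : ℝ =>
      (Real.exp (-(z⁻¹ * x)) : ℂ) * ((z⁻¹ * x : ℝ) : ℂ) ^ (s - 1)) (Ioi 0) := by
    have := (integrableOn_Ioi_comp_mul_left_iff
      (fun x : ℝ => (Real.exp (-x) : ℂ) * (x : ℂ) ^ (s - 1)) 0 (inv_pos.mpr hz)).mpr
    simpa using this (by simpa using h)
  have h3 : IntegrableOn (fun x : ℝ => (z:ℂ)^(s-1) *
      ((Real.exp (-(z⁻¹ * x)) : ℂ) * ((z⁻¹ * x : ℝ) : ℂ) ^ (s - 1))) (Ioi 0) :=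
    h2.const_mul ((z : ℂ) ^ (s - 1))
  refine IntegrableOn.congr_fun h3 (fun x hx => ?_) measurableSet_Ioi
  rw [mem_Ioi] at hx
  rw [Complex.ofReal_mul, Complex.mul_cpow_ofReal_nonneg (inv_pos.mpr hz).le hx.le]
  have key : (z:ℂ)^(s-1) * ((z⁻¹:ℝ):ℂ)^(s-1) = 1 := by
    rw [← Complex.mul_cpow_ofReal_nonneg hz.le (inv_pos.mpr hz).le]
    push_cast
    rw [mul_inv_cancel₀ (by exact_mod_cast hz.ne' : (z:ℂ) ≠ 0), Complex.one_cpow]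
  calc (z:ℂ)^(s-1) * ((Real.exp (-(z⁻¹ * x)) : ℂ) * (((z⁻¹:ℝ):ℂ)^(s-1) * (x:ℂ)^(s-1)))
      = ((z:ℂ)^(s-1) * ((z⁻¹:ℝ):ℂ)^(s-1)) * ((Real.exp (-(z⁻¹ * x)) : ℂ) * (x:ℂ)^(s-1)) := by
        ring
    _ = (Real.exp (-(z⁻¹ * x)) : ℂ) * (x:ℂ)^(s-1) := by rw [key, one_mul]

lemma integral_exp_inv_mul_cpow (s : ℂ) (hs : 0 < s.re) {z : ℝ} (hz : 0 < z) :
    ∫ x in Ioi (0:ℝ), (Real.exp (-(z⁻¹ * x)) : ℂ) * (x : ℂ) ^ (s - 1)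
      = (z : ℂ) ^ s * Complex.Gamma s := by
  have h := Complex.integral_cpow_mul_exp_neg_mul_Ioi hs (inv_pos.mpr hz)
  have h2 : ∫ x in Ioi (0:ℝ), (Real.exp (-(z⁻¹ * x)) : ℂ) * (x : ℂ) ^ (s - 1)
      = ∫ t in Ioi (0:ℝ), (t:ℂ) ^ (s - 1) * Complex.exp (-((z⁻¹ : ℝ) * t : ℂ)) := by
    refine setIntegral_congr_fun measurableSet_Ioi (fun x hx => ?_)
    rw [mul_comm, Complex.ofReal_exp]
    push_cast
    ring_nf
  rw [h2]
  rw [show (∫ t in Ioi (0:ℝ), (t:ℂ) ^ (s - 1) * Complex.exp (-((z⁻¹ : ℝ) * t : ℂ)))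
      = ∫ t in Ioi (0:ℝ), (t:ℂ) ^ (s - 1) * Complex.exp (-((z⁻¹ : ℝ) : ℂ) * t) from by
    refine setIntegral_congr_fun measurableSet_Ioi (fun x hx => ?_); push_cast; ring_nf]
  rw [show ((z:ℂ))^s = ((1 / (z⁻¹:ℝ) : ℂ))^s by push_cast; rw [one_div, inv_inv]]
  convert h using 3 <;> push_cast <;> ring


lemma integrableOn_exp_inv_mul_rpow (p : ℝ) (hp : 0 < p) {z : ℝ} (hz : 0 < z) :
    IntegrableOn (fun x : ℝ => Real.exp (-(z⁻¹ * x)) * x ^ (p - 1)) (Ioi 0) := by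
  have h := Real.GammaIntegral_convergent hp
  have h2 : IntegrableOn (fun x : ℝ =>
      Real.exp (-(z⁻¹ * x)) * (z⁻¹ * x) ^ (p - 1)) (Ioi 0) := by
    have := (integrableOn_Ioi_comp_mul_left_iff
      (fun x : ℝ => Real.exp (-x) * x ^ (p - 1)) 0 (inv_pos.mpr hz)).mpr
    simpa using this (by simpa using h)
  have h3 : IntegrableOn (fun x : ℝ => z ^ (p-1) *
      (Real.exp (-(z⁻¹ * x)) * (z⁻¹ * x) ^ (p - 1))) (Ioi 0) := h2.const_mul _
  refine IntegrableOn.congr_fun h3 (fun x hx => ?_) measurableSet_Ioi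
  rw [mem_Ioi] at hx
  rw [Real.mul_rpow (inv_pos.mpr hz).le hx.le]
  have key : z ^ (p-1) * (z⁻¹) ^ (p-1) = 1 := by
    rw [← Real.mul_rpow hz.le (inv_pos.mpr hz).le, mul_inv_cancel₀ hz.ne', Real.one_rpow]
  calc z ^ (p-1) * (Real.exp (-(z⁻¹ * x)) * ((z⁻¹) ^ (p-1) * x ^ (p-1)))
      = (z ^ (p-1) * (z⁻¹) ^ (p-1)) * (Real.exp (-(z⁻¹ * x)) * x ^ (p-1)) := by ring
    _ = Real.exp (-(z⁻¹ * x)) * x ^ (p-1) := by rw [key, one_mul]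

lemma integral_exp_inv_mul_rpow (p : ℝ) (hp : 0 < p) {z : ℝ} (hz : 0 < z) :
    ∫ x in Ioi (0:ℝ), Real.exp (-(z⁻¹ * x)) * x ^ (p - 1) = z ^ p * Real.Gamma p := by
  have h := Real.integral_rpow_mul_exp_neg_mul_Ioi hp (inv_pos.mpr hz)
  rw [one_div, inv_inv] at h
  rw [← h]
  exact setIntegral_congr_fun measurableSet_Ioi (fun x hx => mul_comm _ _)

/-- The `O_N` remainder estimate for the truncated `q`-expansion of the ℙ¹
oscillatory integral: for real `z, q > 0`, `N : ℕ` and `a ∈ ℂ` with `Re a > N + 1`,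
`|∫₀^∞ e^{−(x+q/x)/z} x^{a−1} dx − Σ_{m=0}^{N} (−1)^m q^m z^{a−2m} Γ(a−m)/m!|
  ≤ q^{N+1} z^{Re a − 2(N+1)} Γ(Re a − N − 1)/(N+1)!`. -/
theorem p1_oscillatory_integral_truncation_estimate
    (z q : ℝ) (hz : 0 < z) (hq : 0 < q) (N : ℕ) (a : ℂ) (ha : (N : ℝ) + 1 < a.re) :
    ‖((∫ x in Ioi (0 : ℝ),
          Complex.exp (-(((x + q / x : ℝ)) : ℂ) / (z : ℂ)) * (x : ℂ) ^ (a - 1))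
        - ∑ m ∈ Finset.range (N + 1),
            (-1 : ℂ) ^ m * (q : ℂ) ^ m * (z : ℂ) ^ (a - 2 * (m : ℂ)) *
              Complex.Gamma (a - (m : ℂ)) / (m.factorial : ℂ))‖
      ≤ q ^ (N + 1) * z ^ (a.re - 2 * ((N : ℝ) + 1)) *
          Real.Gamma (a.re - (N : ℝ) - 1) / ((N + 1).factorial : ℝ) := by
  have hzC : (z:ℂ) ≠ 0 := Complex.ofReal_ne_zero.mpr hz.ne'
  have ha' : 0 < a.re := by
    have : (0:ℝ) ≤ N := Nat.cast_nonneg N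
    linarith
  set p : ℝ := a.re - (N:ℝ) - 1 with hp_def
  have hp : 0 < p := by simp only [hp_def]; linarith
  set C : ℝ := q ^ (N+1) / (z ^ (N+1) * (N+1).factorial) with hC_def
  set g : ℝ → ℂ := fun x : ℝ =>
    Complex.exp (-(((x + q / x : ℝ)) : ℂ) / (z : ℂ)) * (x : ℂ) ^ (a - 1) with hg_def
  set f : ℕ → ℝ → ℂ := fun m x => (-(q:ℂ)/z) ^ m / (m.factorial : ℂ) *
      ((Real.exp (-(z⁻¹ * x)) : ℂ) * (x:ℂ) ^ (a - m - 1)) with hf_def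
  have hms : ∀ m ∈ Finset.range (N+1), 0 < (a - (m:ℂ)).re := by
    intro m hm
    have hm' : (m:ℝ) ≤ N := by exact_mod_cast Nat.lt_succ_iff.mp (Finset.mem_range.mp hm)
    simp only [Complex.sub_re, Complex.natCast_re]
    linarith
  -- integrability of each f m
  have hfint : ∀ m ∈ Finset.range (N+1), IntegrableOn (f m) (Ioi 0) := by
    intro m hm
    exact (integrableOn_exp_inv_mul_cpow (a - m) (hms m hm) hz).const_mul _
  -- value of ∫ f m
  have hfval : ∀ m ∈ Finset.range (N+1),
      (-1 : ℂ) ^ m * (q : ℂ) ^ m * (z : ℂ) ^ (a - 2 * (m : ℂ)) *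
        Complex.Gamma (a - (m : ℂ)) / (m.factorial : ℂ)
      = ∫ x in Ioi (0:ℝ), f m x := by
    intro m hm
    rw [hf_def]
    simp only
    rw [MeasureTheory.integral_const_mul, integral_exp_inv_mul_cpow (a - m) (hms m hm) hz]
    have hzm : ((z:ℂ))^m ≠ 0 := pow_ne_zero _ hzC
    have hfac : (m.factorial : ℂ) ≠ 0 := Nat.cast_ne_zero.mpr m.factorial_ne_zero
    have hsplit : (z:ℂ)^(a - m) = (z:ℂ)^(a - 2*m) * (z:ℂ)^m := by
      rw [← Complex.cpow_natCast, ← Complex.cpow_add _ _ hzC]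
      congr 1
      push_cast
      ring
    rw [hsplit, div_pow, neg_pow]
    field_simp
    ring
  -- measurability of g
  have hgmeas : AEStronglyMeasurable g (volume.restrict (Ioi 0)) := by
    apply ContinuousOn.aestronglyMeasurable _ measurableSet_Ioi
    apply ContinuousOn.mul
    · apply Complex.continuous_exp.comp_continuousOn
      apply ContinuousOn.div_const
      apply ContinuousOn.neg
      apply Complex.continuous_ofReal.comp_continuousOn
      exact continuousOn_id.add (continuousOn_const.div continuousOn_id (fun x hx => ne_of_gt hx))
    · apply continuousOn_of_forall_continuousAt
      intro x hx
      exact (continuousAt_cpow_const (Complex.ofReal_mem_slitPlane.2 hx)).comp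
        Complex.continuous_ofReal.continuousAt
  -- norm of g
  have hgnorm : ∀ x ∈ Ioi (0:ℝ), ‖g x‖ = Real.exp (-((x + q/x)/z)) * x ^ (a.re - 1) := by
    intro x hx
    rw [mem_Ioi] at hx
    show ‖Complex.exp (-(((x + q / x : ℝ)) : ℂ) / (z : ℂ)) * (x : ℂ) ^ (a - 1)‖ = _
    rw [norm_mul,
      show (-(((x + q / x : ℝ)) : ℂ) / (z : ℂ)) = ((-((x + q/x)/z) : ℝ) : ℂ) by push_cast; ring,
      Complex.norm_exp_ofReal, Complex.norm_cpow_eq_rpow_re_of_pos hx]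
    norm_num
  -- integrability of g
  have hgint : IntegrableOn g (Ioi 0) := by
    refine Integrable.mono' (integrableOn_exp_inv_mul_rpow a.re ha' hz) hgmeas ?_
    rw [ae_restrict_iff' measurableSet_Ioi]
    refine ae_of_all _ (fun x hx => ?_)
    rw [hgnorm x hx]
    rw [mem_Ioi] at hx
    have key : z⁻¹ * x + q/(x*z) = (x + q/x)/z := by field_simp
    have h0 : (0:ℝ) ≤ q/(x*z) := by positivity
    have hle : -((x + q/x)/z) ≤ -(z⁻¹ * x) := by linarith
    exact mul_le_mul_of_nonneg_right (Real.exp_le_exp.mpr hle) (Real.rpow_nonneg hx.le _)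
  -- pointwise identity for the difference
  have hdiff : ∀ x ∈ Ioi (0:ℝ), g x - ∑ m ∈ Finset.range (N+1), f m x
      = (Real.exp (-(z⁻¹*x)) : ℂ) * (x:ℂ)^(a-1) *
        ((Real.exp (-(q/(x*z))) - ∑ m ∈ Finset.range (N+1),
          (-(q/(x*z)))^m / m.factorial : ℝ) : ℂ) := by
    intro x hx
    rw [mem_Ioi] at hx
    have hxC : (x:ℂ) ≠ 0 := Complex.ofReal_ne_zero.mpr hx.ne'
    have hg1 : g x = (Real.exp (-(z⁻¹*x)) : ℂ) * (x:ℂ)^(a-1) *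
        ((Real.exp (-(q/(x*z))) : ℝ) : ℂ) := by
      show Complex.exp (-(((x + q / x : ℝ)) : ℂ) / (z : ℂ)) * (x : ℂ) ^ (a - 1) = _
      rw [show (-(((x + q / x : ℝ)) : ℂ) / (z : ℂ))
          = ((-(z⁻¹*x) : ℝ):ℂ) + ((-(q/(x*z)) : ℝ):ℂ) by push_cast; field_simp; ring,
        Complex.exp_add, ← Complex.ofReal_exp, ← Complex.ofReal_exp]
      ring
    have hf1 : ∀ m ∈ Finset.range (N+1), f m x
        = (Real.exp (-(z⁻¹*x)) : ℂ) * (x:ℂ)^(a-1) *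
          (((-(q/(x*z)))^m / m.factorial : ℝ) : ℂ) := by
      intro m _
      have hx1 : (x:ℂ)^(a - m - 1) = (x:ℂ)^(a-1) * ((x:ℂ)^m)⁻¹ := by
        rw [← Complex.cpow_natCast, ← Complex.cpow_neg, ← Complex.cpow_add _ _ hxC]
        congr 1
        ring
      show (-(q:ℂ)/z) ^ m / (m.factorial : ℂ) *
          ((Real.exp (-(z⁻¹ * x)) : ℂ) * (x:ℂ) ^ (a - m - 1)) = _
      rw [hx1]
      have hfac : (m.factorial : ℂ) ≠ 0 := Nat.cast_ne_zero.mpr m.factorial_ne_zero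
      have hxm : ((x:ℂ))^m ≠ 0 := pow_ne_zero _ hxC
      push_cast
      field_simp
      have hxx : (x:ℂ)^m * (x:ℂ)⁻¹^m = 1 := by rw [inv_pow, mul_inv_cancel₀ hxm]
      linear_combination (-((q:ℂ)^m * (z:ℂ)⁻¹^m * (x:ℂ)^(a-1) * (-1)^m)) * hxx
    rw [hg1, Finset.sum_congr rfl hf1, ← Finset.mul_sum, ← mul_sub]
    congr 1
    push_cast
    ring
  -- pointwise norm bound for the difference
  have hnormdiff : ∀ x ∈ Ioi (0:ℝ), ‖g x - ∑ m ∈ Finset.range (N+1), f m x‖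
      ≤ C * (Real.exp (-(z⁻¹*x)) * x ^ (p - 1)) := by
    intro x hx
    rw [hdiff x hx]
    rw [mem_Ioi] at hx
    have ht : (0:ℝ) ≤ q/(x*z) := by positivity
    rw [norm_mul, norm_mul, Complex.norm_real,
      Complex.norm_cpow_eq_rpow_re_of_pos hx, Real.norm_eq_abs,
      abs_of_pos (Real.exp_pos _), Complex.norm_real, Real.norm_eq_abs]
    have htail := exp_neg_taylor_bound (N+1) (q/(x*z)) ht
    have hre1 : (a - 1).re = a.re - 1 := by simp
    rw [hre1]
    calc Real.exp (-(z⁻¹*x)) * x ^ (a.re - 1) *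
          |Real.exp (-(q/(x*z))) - ∑ m ∈ Finset.range (N+1), (-(q/(x*z)))^m / m.factorial|
        ≤ Real.exp (-(z⁻¹*x)) * x ^ (a.re - 1) * ((q/(x*z))^(N+1) / (N+1).factorial) := by
          refine mul_le_mul_of_nonneg_left htail ?_
          positivity
      _ = C * (Real.exp (-(z⁻¹*x)) * x ^ (p - 1)) := by
          have hx_pow : x ^ (a.re - 1) = x ^ (p - 1) * x^(N+1) := by
            rw [← Real.rpow_natCast x (N+1), ← Real.rpow_add hx]
            congr 1
            push_cast
            rw [hp_def]
            ring
          rw [hx_pow, hC_def, div_pow, mul_pow]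
          have h1 : x^(N+1) ≠ 0 := by positivity
          have h2 : z^(N+1) ≠ 0 := by positivity
          have h3 : ((N+1).factorial : ℝ) ≠ 0 := by positivity
          field_simp
  -- assemble
  have hsumint : Integrable (fun x => ∑ m ∈ Finset.range (N+1), f m x)
      (volume.restrict (Ioi 0)) := integrable_finset_sum _ hfint
  rw [Finset.sum_congr rfl hfval, ← integral_finset_sum _ hfint, ← integral_sub hgint hsumint]
  have hbint : Integrable (fun x => C * (Real.exp (-(z⁻¹*x)) * x ^ (p - 1)))
      (volume.restrict (Ioi 0)) := (integrableOn_exp_inv_mul_rpow p hp hz).const_mul _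
  refine le_trans (norm_integral_le_of_norm_le hbint
    ((ae_restrict_iff' measurableSet_Ioi).mpr (ae_of_all _ hnormdiff))) ?_
  rw [MeasureTheory.integral_const_mul, integral_exp_inv_mul_rpow p hp hz]
  have hzp : a.re - 2 * ((N:ℝ)+1) = p - ((N:ℝ)+1) := by rw [hp_def]; ring
  have hzz : z ^ (a.re - 2*((N:ℝ)+1)) = z ^ p / z^(N+1) := by
    rw [hzp, Real.rpow_sub hz]
    congr 1
    rw [← Real.rpow_natCast z (N+1)]
    norm_num
  rw [hzz, hC_def]
  apply le_of_eq
  have h2 : z^(N+1) ≠ 0 := by positivity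
  have h3 : ((N+1).factorial : ℝ) ≠ 0 := by positivity
  field_simp
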